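/- arXiv:2303.05636 — 10 statements merged into one kernel-verified Lean document; each statement's English description precedes it below -/
import Mathlib

section
/- Let a, b, β ∈ ℝ with a > 0, b > 0, β > 0 and βa ≤ b. Then there exists no sequence p : ℕ → ℝ such that for all t ∈ ℕ, p_t > 0 and p_{t+1}·(βa − (1+β)·p_t) = b·p_t. -/
theorem no_bubble_when_beta_a_le_b (a b β : ℝ) (ha : 0 < a) (hb : 0 < b) (hβ : 0 < β)
    (h : β * a ≤ b) :
    ¬ ∃ p : ℕ → ℝ, ∀ t : ℕ, 0 < p t ∧ p (t + 1) * (β * a - (1 + β) * p t) = b * p t := by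
  rintro ⟨p, hp⟩
  have hpos : ∀ t, 0 < p t := fun t => (hp t).1
  have heq : ∀ t, p (t + 1) * (β * a - (1 + β) * p t) = b * p t := fun t => (hp t).2
  -- denominator positive
  have hden : ∀ t, 0 < β * a - (1 + β) * p t := by
    intro t
    by_contra hc
    push_neg at hc
    have : p (t + 1) * (β * a - (1 + β) * p t) ≤ 0 :=
      mul_nonpos_of_nonneg_of_nonpos (hpos (t + 1)).le hc
    nlinarith [mul_pos hb (hpos t), heq t]
  -- p is monotone: p 0 ≤ p t
  have hmono : ∀ t, p 0 ≤ p t := by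
    intro t
    induction t with
    | zero => exact le_rfl
    | succ n ih =>
      have h1 : p (n + 1) * (β * a - (1 + β) * p n) = b * p n := heq n
      have h2 : 0 < β * a - (1 + β) * p n := hden n
      have key : p n ≤ p (n + 1) := by
        nlinarith [hpos n, mul_pos hβ ha, mul_pos (hpos n) hβ]
      linarith
  set c : ℝ := (1 + β) * p 0 ^ 2 / (β * a) with hc
  have hcpos : 0 < c := by
    have h0 := hpos 0
    rw [hc]
    positivity
  -- each step increases by at least c
  have hstep : ∀ t, p t + c ≤ p (t + 1) := by
    intro t
    have h1 := heq t
    have h2 := hden t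
    have h3 := hmono t
    have h4 := hpos 0
    have hba : 0 < β * a := by positivity
    have hinc : p t ≤ p (t + 1) := by
      nlinarith [h1, h2, mul_le_mul_of_nonneg_right h (hpos t).le,
        mul_pos (mul_pos (show (0:ℝ) < 1 + β by linarith) (hpos t)) (hpos t)]
    have hdle : β * a - (1 + β) * p t ≤ β * a := by nlinarith [hpos t]
    have key : c ≤ p (t + 1) - p t := by
      rw [hc, div_le_iff₀ hba]
      nlinarith [h1, mul_le_mul_of_nonneg_right h (hpos t).le,
        mul_le_mul h3 h3 h4.le (hpos t).le,
        mul_le_mul_of_nonneg_left hdle (show (0:ℝ) ≤ p (t + 1) - p t by linarith)]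
    linarith
  have hgrow : ∀ t : ℕ, p 0 + t * c ≤ p t := by
    intro t
    induction t with
    | zero => simp
    | succ n ih =>
      have := hstep n
      push_cast
      nlinarith
  -- but p t < β a / (1+β), contradiction for large t
  obtain ⟨n, hn⟩ := exists_nat_gt ((β * a / (1 + β) - p 0) / c)
  have h1 := hgrow n
  have h2 := hden n
  rw [div_lt_iff₀ hcpos] at hn
  have hβ1 : 0 < 1 + β := by linarith
  rw [div_sub' (ne_of_gt hβ1), div_lt_iff₀ hβ1] at hn
  nlinarith [hpos n]
end

section
/- Let a, b, β, G ∈ ℝ with a, b, β, G > 0, βa > b, and let P_0 ∈ ℝ satisfy 0 < P_0 ≤ (βa − b)/(1+β). Define P : ℕ → ℝ by P_t = G^t / [ (βa/b)^t·(1/P_0 − (1+β)/(βa − b)) + (1+β)/(βa − b) ]. Then for all t ∈ ℕ: P_t > 0, aG^t − P_t > 0, and P_{t+1}·(βaG^t − (1+β)P_t) = bG^{t+1}·P_t. -/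
theorem continuum_of_bubbly_equilibria (a b β G : ℝ)
    (ha : 0 < a) (hb : 0 < b) (hβ : 0 < β) (hG : 0 < G) (hab : b < β * a)
    (P₀ : ℝ) (hP₀ : 0 < P₀) (hP₀' : P₀ ≤ (β * a - b) / (1 + β))
    (P : ℕ → ℝ)
    (hP : ∀ t : ℕ, P t = G ^ t /
      ((β * a / b) ^ t * (1 / P₀ - (1 + β) / (β * a - b)) + (1 + β) / (β * a - b))) :
    ∀ t : ℕ, 0 < P t ∧ 0 < a * G ^ t - P t ∧
      P (t + 1) * (β * a * G ^ t - (1 + β) * P t) = b * G ^ (t + 1) * P t := by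
  have hba : 0 < β * a - b := by linarith
  have h1β : 0 < 1 + β := by linarith
  have hk : 0 < (1 + β) / (β * a - b) := div_pos h1β hba
  have hc : 0 ≤ 1 / P₀ - (1 + β) / (β * a - b) := by
    have h1 : (1 + β) / (β * a - b) ≤ 1 / P₀ := by
      rw [div_le_div_iff₀ hba hP₀]
      have := (le_div_iff₀ h1β).mp hP₀'
      linarith
    linarith
  set c := 1 / P₀ - (1 + β) / (β * a - b) with hc_def
  set k := (1 + β) / (β * a - b) with hk_def
  have hDpos : ∀ t : ℕ, 1 / a < (β * a / b) ^ t * c + k := by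
    intro t
    have h1 : 0 ≤ (β * a / b) ^ t * c :=
      mul_nonneg (pow_nonneg (by positivity) t) hc
    have h2 : 1 / a < k := by
      rw [hk_def, div_lt_div_iff₀ ha hba]
      nlinarith
    linarith
  have hDpos' : ∀ t : ℕ, 0 < (β * a / b) ^ t * c + k := by
    intro t
    have := hDpos t
    have : 0 < 1 / a := by positivity
    linarith [hDpos t]
  intro t
  have hDt := hDpos' t
  have hDt1 := hDpos' (t + 1)
  have hGt : 0 < G ^ t := pow_pos hG t
  have hGt1 : 0 < G ^ (t + 1) := pow_pos hG (t + 1)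
  refine ⟨?_, ?_, ?_⟩
  · rw [hP t]; positivity
  · rw [hP t]
    rw [sub_pos, div_lt_iff₀ hDt]
    have h := hDpos t
    have h1a : 1 < a * ((β * a / b) ^ t * c + k) := by
      rw [one_div] at h
      calc 1 = a * a⁻¹ := (mul_inv_cancel₀ ha.ne').symm
        _ < a * ((β * a / b) ^ t * c + k) := by
            exact mul_lt_mul_of_pos_left h ha
    nlinarith
  · rw [hP t, hP (t + 1)]
    have hkey : β * a * ((β * a / b) ^ t * c + k) - (1 + β)
        = b * ((β * a / b) ^ (t + 1) * c + k) := by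
      have hpow : (β * a / b) ^ (t + 1) = (β * a / b) * (β * a / b) ^ t := by
        ring
      have hkk : (β * a - b) * k = 1 + β := by
        rw [hk_def]; field_simp
      rw [hpow]
      field_simp
      linear_combination hkk
    set D := (β * a / b) ^ t * c + k with hD_def
    set E := (β * a / b) ^ (t + 1) * c + k with hE_def
    clear_value D E
    clear hD_def hE_def hP hDpos hDpos'
    field_simp
    linear_combination hkey
end

section
/- Let a, β ∈ ℝ with a > 0, β > 0. The function f(p) = (1+β)·log(a − p) − β·log(βa − (1+β)p) is strictly increasing on the interval (0, βa/(1+β)); moreover, for every p in this interval, f is differentiable at p with f'(p) = (1+β)p/((a − p)(βa − (1+β)p)) > 0. -/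
theorem utility_strictly_increasing_in_price (a β : ℝ) (ha : 0 < a) (hβ : 0 < β) :
    StrictMonoOn
      (fun p : ℝ => (1 + β) * Real.log (a - p) - β * Real.log (β * a - (1 + β) * p))
      (Set.Ioo 0 (β * a / (1 + β))) ∧
    ∀ p ∈ Set.Ioo (0 : ℝ) (β * a / (1 + β)),
      HasDerivAt
        (fun p : ℝ => (1 + β) * Real.log (a - p) - β * Real.log (β * a - (1 + β) * p))
        ((1 + β) * p / ((a - p) * (β * a - (1 + β) * p))) p ∧
      0 < (1 + β) * p / ((a - p) * (β * a - (1 + β) * p)) := by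
  have hβ1 : (0:ℝ) < 1 + β := by linarith
  have key : ∀ p ∈ Set.Ioo (0 : ℝ) (β * a / (1 + β)),
      HasDerivAt
        (fun p : ℝ => (1 + β) * Real.log (a - p) - β * Real.log (β * a - (1 + β) * p))
        ((1 + β) * p / ((a - p) * (β * a - (1 + β) * p))) p ∧
      0 < (1 + β) * p / ((a - p) * (β * a - (1 + β) * p)) := by
    intro p hp
    obtain ⟨hp0, hp1⟩ := hp
    have h2 : 0 < β * a - (1 + β) * p := by
      have := (lt_div_iff₀ hβ1).mp hp1
      linarith [this]
    have h1 : 0 < a - p := by nlinarith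
    have hd1 : HasDerivAt (fun p : ℝ => a - p) (-1) p := by
      exact (hasDerivAt_id' p).const_sub a
    have hd2 : HasDerivAt (fun p : ℝ => β * a - (1 + β) * p) (-(1 + β)) p := by
      simpa using ((hasDerivAt_id' p).const_mul (1 + β)).const_sub (β * a)
    have hl1 : HasDerivAt (fun p : ℝ => Real.log (a - p)) ((a - p)⁻¹ * (-1)) p :=
      (Real.hasDerivAt_log h1.ne').comp p hd1
    have hl2 : HasDerivAt (fun p : ℝ => Real.log (β * a - (1 + β) * p))
        ((β * a - (1 + β) * p)⁻¹ * (-(1 + β))) p :=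
      by have := (Real.hasDerivAt_log h2.ne').comp p hd2; exact this
    have hpos : 0 < (1 + β) * p / ((a - p) * (β * a - (1 + β) * p)) :=
      div_pos (mul_pos hβ1 hp0) (mul_pos h1 h2)
    refine ⟨?_, hpos⟩
    have := (hl1.const_mul (1 + β)).sub (hl2.const_mul β)
    refine this.congr_deriv ?_
    field_simp [h1.ne', h2.ne']
    ring
  refine ⟨?_, key⟩
  apply strictMonoOn_of_deriv_pos (convex_Ioo _ _)
  · intro x hx
    exact ((key x hx).1.continuousAt).continuousWithinAt
  · intro x hx
    rw [interior_Ioo] at hx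
    rw [(key x hx).1.deriv]
    exact (key x hx).2
end

section
/- Let a, b, β, G ∈ ℝ with a, b, β, G > 0 and βa > b. For P_0 ∈ (0, (βa − b)/(1+β)] define P_t(P_0) = G^t / [ (βa/b)^t·(1/P_0 − (1+β)/(βa − b)) + (1+β)/(βa − b) ], and define P_t(0) = 0 for all t. Suppose 0 ≤ P_0 < P_0' ≤ (βa − b)/(1+β). Then b + P_0(P_0) < b + P_0(P_0') (the initial old strictly prefer the second equilibrium), and for every t ∈ ℕ, log(aG^t − P_t(P_0)) + β·log(bG^{t+1} + P_{t+1}(P_0)) < log(aG^t − P_t(P_0')) + β·log(bG^{t+1} + P_{t+1}(P_0')). -/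
lemma util_key (β A B p q p' q' : ℝ) (hβ : 0 < β)
    (hApos : p' < A) (hBq' : 0 < B + q') (hBq : 0 < B + q)
    (hp' : 0 < p')
    (hpp : p < p') (hratio : q * p' ≤ p * q')
    (hfoc : β * q' * (A - p') = p' * (B + q')) :
    Real.log (A - p) + β * Real.log (B + q) <
    Real.log (A - p') + β * Real.log (B + q') := by
  have hAp : 0 < A - p' := by linarith
  have hAp2 : 0 < A - p := by linarith
  have h1 : Real.log (A - p) - Real.log (A - p') < (p' - p) / (A - p') := by
    have hne : (A - p) / (A - p') ≠ 1 := by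
      intro h
      rw [div_eq_one_iff_eq (ne_of_gt hAp)] at h
      linarith
    have := Real.log_lt_sub_one_of_pos (by positivity) hne
    rw [Real.log_div (ne_of_gt hAp2) (ne_of_gt hAp)] at this
    have heq : (A - p) / (A - p') - 1 = (p' - p) / (A - p') := by
      field_simp
      ring
    linarith [heq ▸ this]
  have h2 : Real.log (B + q) - Real.log (B + q') ≤ (q - q') / (B + q') := by
    have := Real.log_le_sub_one_of_pos (show 0 < (B + q) / (B + q') by positivity)
    rw [Real.log_div (ne_of_gt hBq) (ne_of_gt hBq')] at this
    have heq : (B + q) / (B + q') - 1 = (q - q') / (B + q') := by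
      field_simp
      ring
    linarith [heq ▸ this]
  have hnum : (p' - p) * (B + q') + β * (q - q') * (A - p') ≤ 0 := by
    have h4 : q * p' - p * q' ≤ 0 := by linarith
    nlinarith [mul_pos hAp hβ, hfoc, h4]
  have h3 : (p' - p) / (A - p') + β * ((q - q') / (B + q')) ≤ 0 := by
    have heq : (p' - p) / (A - p') + β * ((q - q') / (B + q')) =
        ((p' - p) * (B + q') + β * (q - q') * (A - p')) / ((A - p') * (B + q')) := by
      field_simp
    rw [heq]
    exact div_nonpos_of_nonpos_of_nonneg hnum (le_of_lt (mul_pos hAp hBq'))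
  have h2' : β * (Real.log (B + q) - Real.log (B + q')) ≤ β * ((q - q') / (B + q')) :=
    mul_le_mul_of_nonneg_left h2 hβ.le
  nlinarith [h1, h2', h3]

lemma foc_lemma (β a b g h d' e' : ℝ) (hd' : d' ≠ 0) (he' : e' ≠ 0)
    (hrec : b * e' = β * a * d' - (1 + β)) :
    β * (h / e') * (a * g - g / d') = (g / d') * (b * h + h / e') := by
  field_simp
  linear_combination (-(g * h)) * hrec

lemma young_lemma (a g d' : ℝ) (hg : 0 < g) (hd' : 0 < d') (had : 1 < a * d') :
    g / d' < a * g := by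
  rw [div_lt_iff₀ hd']
  nlinarith

lemma ratio_lemma (g h d e d' e' : ℝ) (hg : 0 ≤ g) (hh : 0 ≤ h)
    (hd : 0 < d) (he : 0 < e) (hd' : 0 < d') (he' : 0 < e')
    (hde : d * e' ≤ e * d') :
    (h / e) * (g / d') ≤ (g / d) * (h / e') := by
  rw [div_mul_div_comm, div_mul_div_comm, div_le_div_iff₀ (by positivity) (by positivity)]
  nlinarith [mul_le_mul_of_nonneg_left hde (mul_nonneg hg hh)]

theorem pareto_ranking_of_equilibria (a b β G : ℝ)
    (ha : 0 < a) (hb : 0 < b) (hβ : 0 < β) (hG : 0 < G) (hab : b < β * a)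
    (P : ℝ → ℕ → ℝ)
    (hP : ∀ P₀ ∈ Set.Ioc (0 : ℝ) ((β * a - b) / (1 + β)), ∀ t : ℕ,
      P P₀ t = G ^ t /
        ((β * a / b) ^ t * (1 / P₀ - (1 + β) / (β * a - b)) + (1 + β) / (β * a - b)))
    (hPzero : ∀ t : ℕ, P 0 t = 0)
    (P₀ P₀' : ℝ) (h₁ : 0 ≤ P₀) (h₂ : P₀ < P₀') (h₃ : P₀' ≤ (β * a - b) / (1 + β)) :
    b + P P₀ 0 < b + P P₀' 0 ∧
    ∀ t : ℕ,
      Real.log (a * G ^ t - P P₀ t) + β * Real.log (b * G ^ (t + 1) + P P₀ (t + 1)) <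
      Real.log (a * G ^ t - P P₀' t) + β * Real.log (b * G ^ (t + 1) + P P₀' (t + 1)) := by
  have hβa : 0 < β * a - b := by linarith
  have h1β : (0:ℝ) < 1 + β := by linarith
  set D : ℝ := (1 + β) / (β * a - b) with hDdef
  set R : ℝ := β * a / b with hRdef
  have hDpos : 0 < D := by positivity
  have hRpos : 0 < R := by positivity
  have hmem' : P₀' ∈ Set.Ioc (0:ℝ) ((β * a - b) / (1 + β)) :=
    ⟨lt_of_le_of_lt h₁ h₂, h₃⟩
  -- basic facts about the denominators
  have hx : ∀ Q ∈ Set.Ioc (0:ℝ) ((β * a - b) / (1 + β)), 0 ≤ 1 / Q - D := by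
    intro Q hQ
    have hDeq : D = 1 / ((β * a - b) / (1 + β)) := by
      rw [hDdef, one_div_div]
    have := one_div_le_one_div_of_le hQ.1 hQ.2
    rw [← hDeq] at this
    linarith
  have hdD : ∀ Q ∈ Set.Ioc (0:ℝ) ((β * a - b) / (1 + β)), ∀ t : ℕ,
      D ≤ R ^ t * (1 / Q - D) + D := by
    intro Q hQ t
    have := mul_nonneg (pow_nonneg hRpos.le t) (hx Q hQ)
    linarith
  have hdpos : ∀ Q ∈ Set.Ioc (0:ℝ) ((β * a - b) / (1 + β)), ∀ t : ℕ,
      0 < R ^ t * (1 / Q - D) + D := fun Q hQ t => lt_of_lt_of_le hDpos (hdD Q hQ t)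
  have haD : 1 < a * D := by
    rw [hDdef, mul_div_assoc', lt_div_iff₀ hβa]
    nlinarith
  have had : ∀ Q ∈ Set.Ioc (0:ℝ) ((β * a - b) / (1 + β)), ∀ t : ℕ,
      1 < a * (R ^ t * (1 / Q - D) + D) := by
    intro Q hQ t
    have := hdD Q hQ t
    nlinarith
  have hrec : ∀ Q : ℝ, ∀ t : ℕ,
      b * (R ^ (t+1) * (1 / Q - D) + D) = β * a * (R ^ t * (1 / Q - D) + D) - (1 + β) := by
    intro Q t
    have hbR : b * R = β * a := by rw [hRdef]; field_simp
    have hbD : β * a * D - b * D = 1 + β := by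
      rw [hDdef]; field_simp
    rw [pow_succ]
    linear_combination (R ^ t * (1 / Q - D)) * hbR - hbD
  have hP0 : ∀ Q ∈ Set.Ioc (0:ℝ) ((β * a - b) / (1 + β)), P Q 0 = Q := by
    intro Q hQ
    rw [hP Q hQ 0]
    simp [one_div_one_div]
  -- first conjunct
  constructor
  · rw [hP0 P₀' hmem']
    rcases eq_or_lt_of_le h₁ with h0 | h0
    · rw [← h0, hPzero 0]; linarith
    · rw [hP0 P₀ ⟨h0, le_of_lt (lt_of_lt_of_le h₂ h₃)⟩]; linarith
  -- second conjunct
  intro t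
  set d' : ℝ := R ^ t * (1 / P₀' - D) + D with hd'def
  set e' : ℝ := R ^ (t+1) * (1 / P₀' - D) + D with he'def
  have hd'pos : 0 < d' := hdpos P₀' hmem' t
  have he'pos : 0 < e' := hdpos P₀' hmem' (t+1)
  have hp'eq : P P₀' t = G ^ t / d' := hP P₀' hmem' t
  have hq'eq : P P₀' (t+1) = G ^ (t+1) / e' := hP P₀' hmem' (t+1)
  have hp'pos : 0 < G ^ t / d' := by positivity
  have hq'pos : 0 < G ^ (t+1) / e' := by positivity
  have had' : 1 < a * d' := had P₀' hmem' t
  have hApos : G ^ t / d' < a * G ^ t :=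
    young_lemma a (G ^ t) d' (pow_pos hG t) hd'pos had' 
  have hrec' : b * e' = β * a * d' - (1 + β) := hrec P₀' t
  have hfoc : β * (G ^ (t+1) / e') * (a * G ^ t - G ^ t / d') =
      (G ^ t / d') * (b * G ^ (t+1) + G ^ (t+1) / e') :=
    foc_lemma β a b (G ^ t) (G ^ (t+1)) d' e' (ne_of_gt hd'pos) (ne_of_gt he'pos) hrec'
  rw [hp'eq, hq'eq]
  rcases eq_or_lt_of_le h₁ with h0 | h0
  · rw [← h0, hPzero t, hPzero (t+1)]
    apply util_key _ _ _ _ _ _ _ hβ hApos (by positivity) (by positivity) hp'pos hp'pos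
      (by simp) hfoc
  · have hmem : P₀ ∈ Set.Ioc (0:ℝ) ((β * a - b) / (1 + β)) :=
      ⟨h0, le_of_lt (lt_of_lt_of_le h₂ h₃)⟩
    set d : ℝ := R ^ t * (1 / P₀ - D) + D with hddef
    set e : ℝ := R ^ (t+1) * (1 / P₀ - D) + D with hedef
    have hdpos' : 0 < d := hdpos P₀ hmem t
    have hepos' : 0 < e := hdpos P₀ hmem (t+1)
    have hpeq : P P₀ t = G ^ t / d := hP P₀ hmem t
    have hqeq : P P₀ (t+1) = G ^ (t+1) / e := hP P₀ hmem (t+1)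
    rw [hpeq, hqeq]
    have hinv : 1 / P₀' < 1 / P₀ := one_div_lt_one_div_of_lt h0 h₂
    have hdd : d' < d := by
      have := mul_lt_mul_of_pos_left (show 1 / P₀' - D < 1 / P₀ - D by linarith)
        (pow_pos hRpos t)
      rw [hd'def, hddef]
      linarith
    have hpp : G ^ t / d < G ^ t / d' :=
      div_lt_div_of_pos_left (pow_pos hG t) hd'pos hdd
    have hrecc : b * e = β * a * d - (1 + β) := hrec P₀ t
    clear_value d e d' e'
    have hde : d * e' ≤ e * d' := by
      have hkey : b * (e * d') - b * (d * e') = (1 + β) * (d - d') := by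
        linear_combination d' * hrecc - d * hrec'
      have h5 : (0:ℝ) ≤ (1 + β) * (d - d') := mul_nonneg h1β.le (by linarith)
      have h6 : b * (d * e') ≤ b * (e * d') := by linarith
      exact le_of_mul_le_mul_left h6 hb
    have hratio : (G ^ (t+1) / e) * (G ^ t / d') ≤ (G ^ t / d) * (G ^ (t+1) / e') :=
      ratio_lemma (G ^ t) (G ^ (t+1)) d e d' e' (pow_pos hG t).le (pow_pos hG (t+1)).le
        hdpos' hepos' hd'pos he'pos hde
    exact util_key _ _ _ _ _ _ _ hβ hApos (by positivity) (by positivity) hp'pos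
      hpp hratio hfoc
end

section
/- Let a, b, β, G, G_d, D_0 ∈ ℝ with a, b, β, G, G_d, D_0 > 0, βa > b, and bG/(βa) < G_d < G. Then there exists no sequence ξ : ℕ → ℝ such that for all t ∈ ℕ: ξ_t > 0, (ξ_{t+1} + (G_d/G)^{t+1}·D_0)·(βa − (1+β)·ξ_t) = b·ξ_t, and ξ_t → 0 as t → ∞. -/
theorem no_path_to_fundamental_steady_state (a b β G Gd D₀ : ℝ)
    (ha : 0 < a) (hb : 0 < b) (hβ : 0 < β) (hG : 0 < G) (hGd : 0 < Gd) (hD₀ : 0 < D₀)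
    (hab : b < β * a) (hGd₁ : b * G / (β * a) < Gd) (hGd₂ : Gd < G) :
    ¬ ∃ ξ : ℕ → ℝ,
      (∀ t : ℕ, 0 < ξ t ∧
        (ξ (t + 1) + (Gd / G) ^ (t + 1) * D₀) * (β * a - (1 + β) * ξ t) = b * ξ t) ∧
      Filter.Tendsto ξ Filter.atTop (nhds 0) := by
  rintro ⟨ξ, H, hlim⟩
  set q := Gd / G with hqdef
  have hq0 : 0 < q := div_pos hGd hG
  have hq1 : q < 1 := (div_lt_one hG).2 hGd₂
  have hβa : 0 < β * a := mul_pos hβ ha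
  have hbq : b < q * (β * a) := by
    rw [div_lt_iff₀ hβa] at hGd₁
    rw [hqdef, div_mul_eq_mul_div, lt_div_iff₀ hG]
    nlinarith
  set m := (b / q + β * a) / 2 with hmdef
  have hbqa : b / q < β * a := (div_lt_iff₀ hq0).2 (by nlinarith)
  have hm1 : b / q < m := by rw [hmdef]; linarith
  have hm2 : m < β * a := by rw [hmdef]; linarith
  have hm0 : 0 < m := lt_trans (div_pos hb hq0) hm1
  have hbm : b < m * q := (div_lt_iff₀ hq0).1 hm1
  set ε := (β * a - m) / (1 + β) with hεdef
  have h1β : (0:ℝ) < 1 + β := by linarith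
  have hε0 : 0 < ε := div_pos (by linarith) h1β
  obtain ⟨T, hT⟩ := Filter.eventually_atTop.1 (hlim.eventually_lt_const hε0)
  -- key step estimates
  have hstep : ∀ t, T ≤ t → m * ξ (t + 1) < b * ξ t ∧ m * (q ^ (t + 1) * D₀) < b * ξ t := by
    intro t ht
    have hξε : ξ t < ε := hT t ht
    have hden' : m < β * a - (1 + β) * ξ t := by
      have := (lt_div_iff₀ h1β).1 hξε
      linarith
    obtain ⟨hpos, heq⟩ := H t
    have hpos1 := (H (t + 1)).1
    have hd : 0 < q ^ (t + 1) * D₀ := by positivity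
    have e1 : m * (ξ (t + 1) + q ^ (t + 1) * D₀) < b * ξ t := by
      calc m * (ξ (t + 1) + q ^ (t + 1) * D₀)
          < (β * a - (1 + β) * ξ t) * (ξ (t + 1) + q ^ (t + 1) * D₀) :=
            mul_lt_mul_of_pos_right hden' (by linarith)
        _ = b * ξ t := by rw [mul_comm]; exact heq
    constructor
    · nlinarith
    · nlinarith
  have hbm0 : 0 < b / m := div_pos hb hm0
  have hub : ∀ n, ξ (T + n) ≤ (b / m) ^ n * ξ T := by
    intro n
    induction n with
    | zero => simp
    | succ n ih =>
      have h1 := (hstep (T + n) (Nat.le_add_right T n)).1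
      have h2 : ξ (T + n + 1) ≤ (b / m) * ξ (T + n) := by
        rw [div_mul_eq_mul_div, le_div_iff₀ hm0]
        nlinarith
      calc ξ (T + (n + 1)) = ξ (T + n + 1) := by ring_nf
        _ ≤ (b / m) * ξ (T + n) := h2
        _ ≤ (b / m) * ((b / m) ^ n * ξ T) := mul_le_mul_of_nonneg_left ih (le_of_lt hbm0)
        _ = (b / m) ^ (n + 1) * ξ T := by ring
  set r := b / (m * q) with hrdef
  have hr0 : 0 ≤ r := le_of_lt (div_pos hb (mul_pos hm0 hq0))
  have hr1 : r < 1 := (div_lt_one (mul_pos hm0 hq0)).2 hbm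
  have hrq : b / m = r * q := by
    rw [hrdef]; field_simp
  have key : ∀ n, m * q ^ (T + 1) * D₀ < b * ξ T * r ^ n := by
    intro n
    have h2 := (hstep (T + n) (Nat.le_add_right T n)).2
    have h3 := hub n
    have hqn : (0 : ℝ) < q ^ n := pow_pos hq0 n
    have hsplit : q ^ (T + n + 1) = q ^ (T + 1) * q ^ n := by
      rw [show T + n + 1 = (T + 1) + n from by omega, pow_add]
    have hmix : (b / m) ^ n = r ^ n * q ^ n := by
      rw [hrq, mul_pow]
    have hchain : m * q ^ (T + 1) * D₀ * q ^ n < b * ξ T * r ^ n * q ^ n := by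
      calc m * q ^ (T + 1) * D₀ * q ^ n = m * (q ^ (T + n + 1) * D₀) := by
            rw [hsplit]; ring
        _ < b * ξ (T + n) := h2
        _ ≤ b * ((b / m) ^ n * ξ T) := mul_le_mul_of_nonneg_left h3 (le_of_lt hb)
        _ = b * ξ T * r ^ n * q ^ n := by rw [hmix]; ring
    exact lt_of_mul_lt_mul_right (by linarith [hchain]) (le_of_lt hqn)
  have hξT := (H T).1
  have hC : 0 < m * q ^ (T + 1) * D₀ := by positivity
  have hbξT : 0 < b * ξ T := mul_pos hb hξT
  have htend : Filter.Tendsto (fun n => r ^ n) Filter.atTop (nhds 0) :=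
    tendsto_pow_atTop_nhds_zero_of_lt_one hr0 hr1
  have hε2 : 0 < m * q ^ (T + 1) * D₀ / (b * ξ T) := div_pos hC hbξT
  obtain ⟨n, hn⟩ := (htend.eventually_lt_const hε2).exists
  have := key n
  rw [lt_div_iff₀ hbξT] at hn
  have h' : b * ξ T * r ^ n = r ^ n * (b * ξ T) := by ring
  linarith
end

section
/- Let a, b, β, G, G_d, D_0 ∈ ℝ with a, b, β, G, G_d, D_0 > 0, βa > b, and bG/(βa) < G_d < G. Then there exists exactly one sequence ξ : ℕ → ℝ such that for all t ∈ ℕ: ξ_t > 0, (ξ_{t+1} + (G_d/G)^{t+1}·D_0)·(βa − (1+β)·ξ_t) = b·ξ_t, and ξ_t → (βa − b)/(1+β) as t → ∞. -/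
open Filter
open scoped BoundedContinuousFunction

noncomputable def gmap (A b B1 u : ℝ) : ℝ := A * u / (b + B1 * u)

lemma gmap_eq (A b B1 u : ℝ) (h : 0 < b + B1 * u) :
    u * (A - B1 * gmap A b B1 u) = b * gmap A b B1 u := by
  unfold gmap; rw [mul_div_assoc', mul_div_assoc', sub_div' h.ne', mul_div_assoc', div_eq_div_iff h.ne' h.ne']; ring

lemma eq_gmap (A b B1 u x : ℝ) (hb : 0 < b) (hB1 : 0 < B1) (hu : 0 < u)
    (hx : u * (A - B1 * x) = b * x) : x = gmap A b B1 u := by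
  have h : 0 < b + B1 * u := by positivity
  unfold gmap
  rw [eq_div_iff h.ne']
  linear_combination -hx

lemma gmap_sub (A b B1 u v : ℝ) (hu : (0:ℝ) < b + B1 * u) (hv : 0 < b + B1 * v) :
    gmap A b B1 u - gmap A b B1 v = A * b * (u - v) / ((b + B1 * u) * (b + B1 * v)) := by
  unfold gmap; rw [div_sub_div _ _ hu.ne' hv.ne']; ring

lemma gmap_lip (A b B1 m u v : ℝ) (hA : 0 ≤ A) (hb : 0 ≤ b) (hB1 : 0 ≤ B1)
    (hq : 0 < b + B1 * m) (hu : m ≤ u) (hv : m ≤ v) :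
    |gmap A b B1 u - gmap A b B1 v| ≤ A * b / (b + B1 * m) ^ 2 * |u - v| := by
  have h1 : b + B1 * m ≤ b + B1 * u := by nlinarith [mul_le_mul_of_nonneg_left hu hB1]
  have h1' : b + B1 * m ≤ b + B1 * v := by nlinarith [mul_le_mul_of_nonneg_left hv hB1]
  have hu' : 0 < b + B1 * u := lt_of_lt_of_le hq h1
  have hv' : 0 < b + B1 * v := lt_of_lt_of_le hq h1'
  have h2 : (b + B1 * m) ^ 2 ≤ (b + B1 * u) * (b + B1 * v) := by nlinarith
  rw [gmap_sub A b B1 u v hu' hv', abs_div, abs_mul, abs_mul,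
    abs_of_nonneg hA, abs_of_nonneg hb, abs_of_pos (mul_pos hu' hv')]
  calc A * b * |u - v| / ((b + B1 * u) * (b + B1 * v))
      ≤ A * b * |u - v| / ((b + B1 * m) ^ 2) := by
        gcongr
    _ = A * b / (b + B1 * m) ^ 2 * |u - v| := by ring

lemma gmap_lower (A b B1 m u : ℝ) (hb : 0 < b) (hB1 : 0 < B1) (hm0 : 0 ≤ m)
    (hqA : b + B1 * m ≤ A) (hu : m ≤ u) : m ≤ gmap A b B1 u := by
  have hu0 : 0 ≤ u := hm0.trans hu
  have hu' : 0 < b + B1 * u := by positivity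
  rw [gmap, le_div_iff₀ hu']
  nlinarith [mul_le_mul_of_nonneg_right hqA hu0, mul_le_mul_of_nonneg_left hu hb.le]

lemma gmap_le_M (A b B1 u : ℝ) (hb : 0 < b) (hB1 : 0 < B1) (hA : 0 ≤ A) (hu : 0 ≤ u) :
    gmap A b B1 u ≤ A / B1 := by
  have hu' : 0 < b + B1 * u := by positivity
  rw [gmap, div_le_div_iff₀ hu' hB1]
  nlinarith

set_option maxHeartbeats 2000000 in
theorem unique_path_to_bubbly_steady_state (a b β G Gd D₀ : ℝ)
    (ha : 0 < a) (hb : 0 < b) (hβ : 0 < β) (hG : 0 < G) (hGd : 0 < Gd) (hD₀ : 0 < D₀)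
    (hab : b < β * a) (hGd₁ : b * G / (β * a) < Gd) (hGd₂ : Gd < G) :
    ∃! ξ : ℕ → ℝ,
      (∀ t : ℕ, 0 < ξ t ∧
        (ξ (t + 1) + (Gd / G) ^ (t + 1) * D₀) * (β * a - (1 + β) * ξ t) = b * ξ t) ∧
      Filter.Tendsto ξ Filter.atTop (nhds ((β * a - b) / (1 + β))) := by
  set A := β * a with hAdef
  set r := Gd / G with hrdef
  have hB1 : (0:ℝ) < 1 + β := by linarith
  have hA : 0 < A := by positivity
  have hr0 : 0 < r := by positivity
  have hr1 : r < 1 := (div_lt_one hG).2 hGd₂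
  set c := Real.sqrt (A * b) with hcdef
  have hc2 : c ^ 2 = A * b := Real.sq_sqrt (by positivity)
  have hc0 : 0 < c := Real.sqrt_pos.2 (by positivity)
  have hbc : b < c := by nlinarith
  have hcA : c < A := by nlinarith
  set q := (c + A) / 2 with hqdef
  have hcq : c < q := by rw [hqdef]; linarith
  have hqA : q < A := by rw [hqdef]; linarith
  have hbq : b < q := by linarith
  have hq0 : 0 < q := by linarith
  set m := (q - b) / (1 + β) with hmdef
  have hm0 : 0 < m := by rw [hmdef]; exact div_pos (by linarith) hB1
  have hqm : b + (1 + β) * m = q := by rw [hmdef]; field_simp; ring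
  set k := A * b / q ^ 2 with hkdef
  have hk0 : 0 < k := by positivity
  have hk1 : k < 1 := by
    rw [hkdef, div_lt_one (by positivity)]
    nlinarith
  set M := A / (1 + β) with hMdef
  set xstar := (A - b) / (1 + β) with hxdef
  have hmx : m < xstar := by
    rw [hmdef, hxdef]
    gcongr
  have hxm : m ≤ xstar := hmx.le
  have hxM : xstar ≤ M := by
    rw [hxdef, hMdef]
    gcongr
    linarith
  have hmM : m < M := lt_of_lt_of_le hmx hxM
  have hkr : k * r < 1 := by nlinarith
  set S := D₀ * (k * r) / (1 - k * r) with hSdef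
  have hS0 : 0 ≤ S := by
    rw [hSdef]; exact div_nonneg (by positivity) (by linarith)
  have hSeq : k * r * (S + D₀) = S := by
    have h1 : (1 : ℝ) - k * r ≠ 0 := by linarith
    rw [hSdef]; field_simp; ring
  -- the fixed-point equation for xstar
  have hxfix : gmap A b (1 + β) xstar = xstar := by
    have hden : b + (1 + β) * xstar = A := by rw [hxdef]; field_simp; ring
    rw [gmap, hden]
    field_simp
  -- range of the iteration map
  have hrange : ∀ (x : ℝ) (t : ℕ),
      m ≤ gmap A b (1 + β) (max m x + r ^ (t + 1) * D₀) ∧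
      gmap A b (1 + β) (max m x + r ^ (t + 1) * D₀) ≤ M := by
    intro x t
    have hu : m ≤ max m x + r ^ (t + 1) * D₀ := by
      have : (0:ℝ) ≤ r ^ (t + 1) * D₀ := by positivity
      have := le_max_left m x
      linarith
    constructor
    · exact gmap_lower A b (1 + β) m _ hb hB1 hm0.le (by rw [hqm]; exact hqA.le) hu
    · exact gmap_le_M A b (1 + β) _ hb hB1 hA.le (hm0.le.trans hu)
  -- the iteration operator on bounded sequences
  let Φ : (ℕ →ᵇ ℝ) → (ℕ →ᵇ ℝ) := fun ξ =>
    BoundedContinuousFunction.mkOfBound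
      ⟨fun t => gmap A b (1 + β) (max m (ξ (t + 1)) + r ^ (t + 1) * D₀),
        continuous_of_discreteTopology⟩ (M - m)
      (by
        intro s t
        have h1 := hrange (ξ (s + 1)) s
        have h2 := hrange (ξ (t + 1)) t
        rw [ContinuousMap.coe_mk, Real.dist_eq, abs_sub_le_iff]
        constructor <;> linarith [h1.1, h1.2, h2.1, h2.2])
  have hΦcoe : ∀ (ξ : ℕ →ᵇ ℝ) (t : ℕ),
      Φ ξ t = gmap A b (1 + β) (max m (ξ (t + 1)) + r ^ (t + 1) * D₀) := fun _ _ => rfl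
  -- the Lipschitz bound in usable form
  have hlipm : ∀ u v : ℝ, m ≤ u → m ≤ v →
      |gmap A b (1 + β) u - gmap A b (1 + β) v| ≤ k * |u - v| := by
    intro u v hu hv
    have h := gmap_lip A b (1 + β) m u v hA.le hb.le hB1.le (by rw [hqm]; exact hq0) hu hv
    rwa [hqm, ← hkdef] at h
  have hgem : ∀ (x : ℝ) (t : ℕ), m ≤ max m x + r ^ (t + 1) * D₀ := by
    intro x t
    have h1 : (0:ℝ) ≤ r ^ (t + 1) * D₀ := by positivity
    have h2 := le_max_left m x
    linarith
  have hcontr : ContractingWith ⟨k, hk0.le⟩ Φ := by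
    constructor
    · exact_mod_cast hk1
    · apply LipschitzWith.of_dist_le_mul
      intro ξ ξ'
      show dist (Φ ξ) (Φ ξ') ≤ k * dist ξ ξ'
      have hd : (0:ℝ) ≤ k * dist ξ ξ' := mul_nonneg hk0.le dist_nonneg
      rw [BoundedContinuousFunction.dist_le hd]
      intro t
      rw [hΦcoe, hΦcoe, Real.dist_eq]
      have h1 := hlipm _ _ (hgem (ξ (t + 1)) t) (hgem (ξ' (t + 1)) t)
      have h2 : |max m (ξ (t + 1)) + r ^ (t + 1) * D₀ - (max m (ξ' (t + 1)) + r ^ (t + 1) * D₀)|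
          = |max m (ξ (t + 1)) - max m (ξ' (t + 1))| := by
        congr 1; ring
      have h3 : |max m (ξ (t + 1)) - max m (ξ' (t + 1))| ≤ |ξ (t + 1) - ξ' (t + 1)| := by
        rw [max_comm m (ξ (t + 1)), max_comm m (ξ' (t + 1))]
        exact abs_max_sub_max_le_abs _ _ _
      have h4 : |ξ (t + 1) - ξ' (t + 1)| ≤ dist ξ ξ' := by
        rw [← Real.dist_eq]; exact BoundedContinuousFunction.dist_coe_le_dist _
      have : |gmap A b (1 + β) (max m (ξ (t + 1)) + r ^ (t + 1) * D₀) -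
          gmap A b (1 + β) (max m (ξ' (t + 1)) + r ^ (t + 1) * D₀)| ≤ k * dist ξ ξ' := by
        calc _ ≤ k * |max m (ξ (t + 1)) + r ^ (t + 1) * D₀ -
              (max m (ξ' (t + 1)) + r ^ (t + 1) * D₀)| := h1
          _ ≤ k * dist ξ ξ' := by
              rw [h2]
              exact mul_le_mul_of_nonneg_left (h3.trans h4) hk0.le
      exact this
  -- the fixed point
  obtain ⟨ξ0, hfix⟩ : ∃ ξ0 : ℕ →ᵇ ℝ, Φ ξ0 = ξ0 :=
    ⟨ContractingWith.fixedPoint Φ hcontr, hcontr.fixedPoint_isFixedPt⟩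
  have hfixt : ∀ t, ξ0 t = gmap A b (1 + β) (max m (ξ0 (t + 1)) + r ^ (t + 1) * D₀) := by
    intro t
    conv_lhs => rw [← hfix]
    exact hΦcoe ξ0 t
  clear hfix hΦcoe hcontr Φ
  have hbounds : ∀ t, m ≤ ξ0 t ∧ ξ0 t ≤ M := fun t => by
    rw [hfixt t]; exact hrange _ t
  have hrec : ∀ t, ξ0 t = gmap A b (1 + β) (ξ0 (t + 1) + r ^ (t + 1) * D₀) := by
    intro t
    rw [hfixt t, max_eq_right (hbounds (t + 1)).1]
  -- geometric convergence to the steady state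
  have hclaim : ∀ n t, |ξ0 t - xstar| ≤ k ^ n * (M - m) + r ^ t * S := by
    intro n
    induction n with
    | zero =>
      intro t
      have h1 := hbounds t
      have h2 : (0:ℝ) ≤ r ^ t * S := by positivity
      rw [pow_zero, one_mul]
      rw [abs_sub_le_iff]
      constructor <;> linarith [h1.1, h1.2, hxm, hxM, h2]
    | succ n ih =>
      intro t
      have hd0 : (0:ℝ) ≤ r ^ (t + 1) * D₀ := by positivity
      have hu : m ≤ ξ0 (t + 1) + r ^ (t + 1) * D₀ := by
        have := (hbounds (t + 1)).1; linarith
      have h1 : |ξ0 t - xstar| ≤ k * |ξ0 (t + 1) + r ^ (t + 1) * D₀ - xstar| := by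
        conv_lhs => rw [hrec t, ← hxfix]
        exact hlipm _ _ hu hxm
      have h2 : |ξ0 (t + 1) + r ^ (t + 1) * D₀ - xstar|
          ≤ |ξ0 (t + 1) - xstar| + r ^ (t + 1) * D₀ := by
        have ha1 := abs_add_le (ξ0 (t + 1) - xstar) (r ^ (t + 1) * D₀)
        have ha2 : |r ^ (t + 1) * D₀| = r ^ (t + 1) * D₀ := abs_of_nonneg hd0
        have ha3 : ξ0 (t + 1) + r ^ (t + 1) * D₀ - xstar
            = (ξ0 (t + 1) - xstar) + r ^ (t + 1) * D₀ := by ring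
        rw [ha3]
        linarith
      have h3 := ih (t + 1)
      calc |ξ0 t - xstar| ≤ k * (|ξ0 (t + 1) - xstar| + r ^ (t + 1) * D₀) :=
            h1.trans (mul_le_mul_of_nonneg_left h2 hk0.le)
        _ ≤ k * (k ^ n * (M - m) + r ^ (t + 1) * S + r ^ (t + 1) * D₀) := by
            apply mul_le_mul_of_nonneg_left _ hk0.le
            linarith
        _ = k ^ (n + 1) * (M - m) + r ^ t * (k * r * (S + D₀)) := by ring
        _ = k ^ (n + 1) * (M - m) + r ^ t * S := by rw [hSeq]
  have hconv : ∀ t, |ξ0 t - xstar| ≤ r ^ t * S := by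
    intro t
    have hlim : Tendsto (fun n => k ^ n * (M - m) + r ^ t * S) atTop (nhds (r ^ t * S)) := by
      have h := ((tendsto_pow_atTop_nhds_zero_of_lt_one hk0.le hk1).mul_const (M - m)).add_const
        (r ^ t * S)
      simpa using h
    exact ge_of_tendsto' hlim (fun n => hclaim n t)
  have htend : Tendsto (fun t => ξ0 t) atTop (nhds xstar) := by
    rw [← tendsto_sub_nhds_zero_iff]
    have hsq : ∀ t : ℕ, ‖ξ0 t - xstar‖ ≤ r ^ t * S := fun t => by
      rw [Real.norm_eq_abs]; exact hconv t
    have hlim2 : Tendsto (fun t : ℕ => r ^ t * S) atTop (nhds 0) := by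
      have h := (tendsto_pow_atTop_nhds_zero_of_lt_one hr0.le hr1).mul_const S
      simpa using h
    exact squeeze_zero_norm hsq hlim2
  -- every solution satisfies the backward recursion and the upper bound
  have hsol : ∀ ξ : ℕ → ℝ,
      (∀ t : ℕ, 0 < ξ t ∧ (ξ (t + 1) + r ^ (t + 1) * D₀) * (A - (1 + β) * ξ t) = b * ξ t) →
      ∀ t, ξ t = gmap A b (1 + β) (ξ (t + 1) + r ^ (t + 1) * D₀) := by
    intro ξ hξ t
    have hd0 : (0:ℝ) < r ^ (t + 1) * D₀ := by positivity
    have hu : 0 < ξ (t + 1) + r ^ (t + 1) * D₀ := by linarith [(hξ (t + 1)).1]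
    exact eq_gmap A b (1 + β) _ _ hb hB1 hu (hξ t).2
  -- uniqueness
  have huniq : ∀ ξ ξ' : ℕ → ℝ,
      ((∀ t : ℕ, 0 < ξ t ∧ (ξ (t + 1) + r ^ (t + 1) * D₀) * (A - (1 + β) * ξ t) = b * ξ t) ∧
        Tendsto ξ atTop (nhds xstar)) →
      ((∀ t : ℕ, 0 < ξ' t ∧ (ξ' (t + 1) + r ^ (t + 1) * D₀) * (A - (1 + β) * ξ' t) = b * ξ' t) ∧
        Tendsto ξ' atTop (nhds xstar)) → ξ = ξ' := by
    rintro ξ ξ' ⟨h1, h1t⟩ ⟨h2, h2t⟩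
    have hg1 := hsol ξ h1
    have hg2 := hsol ξ' h2
    have hupper : ∀ (η : ℕ → ℝ), (∀ t, 0 < η t) →
        (∀ t, η t = gmap A b (1 + β) (η (t + 1) + r ^ (t + 1) * D₀)) → ∀ t, η t ≤ M := by
      intro η hpos hg t
      rw [hg t]
      have hd0 : (0:ℝ) ≤ r ^ (t + 1) * D₀ := by positivity
      exact gmap_le_M A b (1 + β) _ hb hB1 hA.le (by linarith [hpos (t + 1)])
    have hM1 := hupper ξ (fun t => (h1 t).1) hg1
    have hM2 := hupper ξ' (fun t => (h2 t).1) hg2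
    have hev : ∀ᶠ t in atTop, m < ξ t ∧ m < ξ' t :=
      (h1t.eventually (eventually_gt_nhds hmx)).and (h2t.eventually (eventually_gt_nhds hmx))
    obtain ⟨T, hT⟩ := eventually_atTop.1 hev
    have hkey : ∀ n t, T ≤ t → |ξ t - ξ' t| ≤ k ^ n * M := by
      intro n
      induction n with
      | zero =>
        intro t ht
        rw [pow_zero, one_mul, abs_sub_le_iff]
        constructor <;> linarith [(h1 t).1, (h2 t).1, hM1 t, hM2 t]
      | succ n ih =>
        intro t ht
        have ht1 : T ≤ t + 1 := ht.trans (Nat.le_succ t)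
        have hd0 : (0:ℝ) ≤ r ^ (t + 1) * D₀ := by positivity
        have hu : m ≤ ξ (t + 1) + r ^ (t + 1) * D₀ := by
          linarith [(hT (t + 1) ht1).1]
        have hu' : m ≤ ξ' (t + 1) + r ^ (t + 1) * D₀ := by
          linarith [(hT (t + 1) ht1).2]
        have hcancel : |ξ (t + 1) + r ^ (t + 1) * D₀ - (ξ' (t + 1) + r ^ (t + 1) * D₀)|
            = |ξ (t + 1) - ξ' (t + 1)| := by congr 1; ring
        calc |ξ t - ξ' t|
            = |gmap A b (1 + β) (ξ (t + 1) + r ^ (t + 1) * D₀) -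
                gmap A b (1 + β) (ξ' (t + 1) + r ^ (t + 1) * D₀)| := by rw [hg1 t, hg2 t]
          _ ≤ k * |ξ (t + 1) + r ^ (t + 1) * D₀ - (ξ' (t + 1) + r ^ (t + 1) * D₀)| :=
              hlipm _ _ hu hu'
          _ = k * |ξ (t + 1) - ξ' (t + 1)| := by rw [hcancel]
          _ ≤ k * (k ^ n * M) := mul_le_mul_of_nonneg_left (ih (t + 1) ht1) hk0.le
          _ = k ^ (n + 1) * M := by ring
    have heqT : ∀ t, T ≤ t → ξ t = ξ' t := by
      intro t ht
      have hlim : Tendsto (fun n => k ^ n * M) atTop (nhds 0) := by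
        have h := (tendsto_pow_atTop_nhds_zero_of_lt_one hk0.le hk1).mul_const M
        simpa using h
      have h0 : |ξ t - ξ' t| ≤ 0 := ge_of_tendsto' hlim (fun n => hkey n t ht)
      have := abs_nonpos_iff.1 h0
      linarith [sub_eq_zero.1 this, le_of_eq (sub_eq_zero.1 this)]
    have hall : ∀ j t, T ≤ t + j → ξ t = ξ' t := by
      intro j
      induction j with
      | zero => intro t ht; exact heqT t (by simpa using ht)
      | succ j ih =>
        intro t ht
        have h5 : ξ (t + 1) = ξ' (t + 1) := ih (t + 1) (by omega)
        rw [hg1 t, hg2 t, h5]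
    funext t
    exact hall T t (Nat.le_add_left T t)
  -- assemble
  refine ⟨fun t => ξ0 t, ⟨⟨fun t => ⟨lt_of_lt_of_le hm0 (hbounds t).1, ?_⟩, htend⟩, ?_⟩⟩
  · have hd0 : (0:ℝ) < r ^ (t + 1) * D₀ := by positivity
    have hden : 0 < b + (1 + β) * (ξ0 (t + 1) + r ^ (t + 1) * D₀) := by
      have := (hbounds (t + 1)).1
      have : 0 < ξ0 (t + 1) + r ^ (t + 1) * D₀ := by linarith
      positivity
    have h := gmap_eq A b (1 + β) (ξ0 (t + 1) + r ^ (t + 1) * D₀) hden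
    rw [← hrec t] at h
    exact h
  · intro y hy
    exact huniq y (fun t => ξ0 t)
      (by exact_mod_cast hy)
      ⟨fun t => ⟨lt_of_lt_of_le hm0 (hbounds t).1, by
        have hd0 : (0:ℝ) < r ^ (t + 1) * D₀ := by positivity
        have hden : 0 < b + (1 + β) * (ξ0 (t + 1) + r ^ (t + 1) * D₀) := by
          have := (hbounds (t + 1)).1
          have : 0 < ξ0 (t + 1) + r ^ (t + 1) * D₀ := by linarith
          positivity
        have h := gmap_eq A b (1 + β) (ξ0 (t + 1) + r ^ (t + 1) * D₀) hden
        rw [← hrec t] at h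
        exact h⟩, htend⟩
end

section
/- Let G, ω, c, σ, d ∈ ℝ with G > 0, ω > 0, 0 < c < ω, σ > 0, and d < 0. Then G − (σ − 1)·d / ( −σ·G/c − σ·G/(ω − c) ) > 0 if and only if 1/σ > 1 + (G²/d)·ω/(c·(ω − c)). -/
theorem eis_condition_equivalence (G ω c σ d : ℝ)
    (hG : 0 < G) (hω : 0 < ω) (hc : 0 < c) (hcω : c < ω) (hσ : 0 < σ) (hd : d < 0) :
    0 < G - (σ - 1) * d / (-(σ * G / c) - σ * G / (ω - c)) ↔
    1 / σ > 1 + (G ^ 2 / d) * ω / (c * (ω - c)) := by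
  have hcw : 0 < ω - c := by linarith
  set N : ℝ := σ * G ^ 2 * ω + (σ - 1) * d * (c * (ω - c)) with hN
  have hden1 : (0:ℝ) < σ * G * ω := by positivity
  have hden2 : (0:ℝ) < -(σ * d * (c * (ω - c))) := by nlinarith [mul_pos (mul_pos hσ (neg_pos.mpr hd)) (mul_pos hc hcw)]
  have hDne : -(σ * G / c) - σ * G / (ω - c) ≠ 0 := by
    have : -(σ * G / c) - σ * G / (ω - c) < 0 := by
      have h1 : 0 < σ * G / c := by positivity
      have h2 : 0 < σ * G / (ω - c) := by positivity
      linarith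
    exact this.ne
  have hD : -(σ * G / c) - σ * G / (ω - c) = -(σ * G * ω) / (c * (ω - c)) := by
    field_simp
    ring
  have h1 : G - (σ - 1) * d / (-(σ * G / c) - σ * G / (ω - c)) = N / (σ * G * ω) := by
    rw [hN, hD, div_div_eq_mul_div, div_neg, sub_neg_eq_add, eq_div_iff hden1.ne', add_mul,
      div_mul_cancel₀ _ hden1.ne']
    ring
  have h2 : 1 / σ - (1 + (G ^ 2 / d) * ω / (c * (ω - c))) = N / (-(σ * d * (c * (ω - c)))) := by
    rw [hN]
    field_simp [hG.ne', hσ.ne', hω.ne', hc.ne', hcw.ne', hd.ne, hDne]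
    ring
  have e1 : 0 < N / (σ * G * ω) ↔ 0 < N := by
    constructor
    · intro h
      rcases div_pos_iff.mp h with ⟨h', _⟩ | ⟨_, h''⟩
      · exact h'
      · linarith
    · intro h; exact div_pos h hden1
  have e2 : 0 < N / (-(σ * d * (c * (ω - c)))) ↔ 0 < N := by
    constructor
    · intro h
      rcases div_pos_iff.mp h with ⟨h', _⟩ | ⟨_, h''⟩
      · exact h'
      · linarith
    · intro h; exact div_pos h hden2
  rw [h1, e1, gt_iff_lt]
  conv_rhs => rw [← sub_pos, h2, e2]
end

section
/- Let I ⊆ ℝ be an open interval, r ∈ ℝ with r > 0, and let M : ℝ × ℝ → ℝ be continuously differentiable, ω : I → ℝ and c : I → ℝ be differentiable, with ω'(k) > 0 for all k ∈ I. Suppose that for all k ∈ I, M(c(k), r·(ω(k) − c(k))) = r, and that at every point (x, y) = (c(k), r(ω(k) − c(k))) with k ∈ I, the partial derivatives satisfy ∂₁M(x,y) < 0 and ∂₂M(x,y) > 0. Then for every k ∈ I, ω'(k) − c'(k) = ω'(k)·∂₁M / (∂₁M − r·∂₂M) > 0, where the partial derivatives of M are evaluated at (c(k), r(ω(k) − c(k))).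 -/
theorem p_positive_step2 (I : Set ℝ) (hIopen : IsOpen I) (hIconv : Convex ℝ I)
    (r : ℝ) (hr : 0 < r)
    (M : ℝ × ℝ → ℝ) (hM : ContDiff ℝ 1 M)
    (ω c : ℝ → ℝ)
    (hω : ∀ k ∈ I, DifferentiableAt ℝ ω k)
    (hc : ∀ k ∈ I, DifferentiableAt ℝ c k)
    (hω' : ∀ k ∈ I, 0 < deriv ω k)
    (hfoc : ∀ k ∈ I, M (c k, r * (ω k - c k)) = r)
    (hM1 : ∀ k ∈ I, fderiv ℝ M (c k, r * (ω k - c k)) (1, 0) < 0)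
    (hM2 : ∀ k ∈ I, 0 < fderiv ℝ M (c k, r * (ω k - c k)) (0, 1)) :
    ∀ k ∈ I,
      deriv ω k - deriv c k =
        deriv ω k * fderiv ℝ M (c k, r * (ω k - c k)) (1, 0) /
          (fderiv ℝ M (c k, r * (ω k - c k)) (1, 0) -
            r * fderiv ℝ M (c k, r * (ω k - c k)) (0, 1)) ∧
      0 < deriv ω k - deriv c k := by
  intro k hk
  have hM1k := hM1 k hk
  have hM2k := hM2 k hk
  have hck := hc k hk
  have hωk := hω k hk
  set p : ℝ × ℝ := (c k, r * (ω k - c k)) with hp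
  set a : ℝ := fderiv ℝ M p (1, 0) with ha
  set b : ℝ := fderiv ℝ M p (0, 1) with hb
  have hh : HasDerivAt (fun k => (c k, r * (ω k - c k)))
      (deriv c k, r * (deriv ω k - deriv c k)) k :=
    (hck.hasDerivAt).prodMk ((hωk.hasDerivAt.sub hck.hasDerivAt).const_mul r)
  have hMd : HasFDerivAt M (fderiv ℝ M p) p :=
    ((hM.differentiable one_ne_zero) p).hasFDerivAt
  have hcomp : HasDerivAt (fun k => M (c k, r * (ω k - c k)))
      (fderiv ℝ M p (deriv c k, r * (deriv ω k - deriv c k))) k :=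
    hMd.comp_hasDerivAt k hh
  have hconst : deriv (fun k => M (c k, r * (ω k - c k))) k = 0 := by
    have hev : (fun k => M (c k, r * (ω k - c k))) =ᶠ[nhds k] fun _ => r :=
      Filter.eventuallyEq_of_mem (hIopen.mem_nhds hk) hfoc
    rw [hev.deriv_eq]; simp
  have heq0 : fderiv ℝ M p (deriv c k, r * (deriv ω k - deriv c k)) = 0 := by
    rw [← hcomp.deriv]; exact hconst
  have hlin : deriv c k * a + r * (deriv ω k - deriv c k) * b = 0 := by
    have hsum : (deriv c k, r * (deriv ω k - deriv c k))
        = deriv c k • ((1:ℝ), (0:ℝ)) + (r * (deriv ω k - deriv c k)) • ((0:ℝ), (1:ℝ)) := by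
      simp [Prod.ext_iff]
    have := heq0
    rw [hsum, map_add, map_smul, map_smul] at this
    simpa [ha, hb, smul_eq_mul, mul_comm] using this
  have hden : a - r * b < 0 := by nlinarith
  have hdenne : a - r * b ≠ 0 := ne_of_lt hden
  constructor
  · field_simp
    nlinarith [hlin]
  · have hω'k := hω' k hk
    have : deriv ω k - deriv c k = deriv ω k * a / (a - r * b) := by
      field_simp
      nlinarith [hlin]
    rw [this]
    exact div_pos_of_neg_of_neg (by nlinarith) hden
end

section
/- Let β ∈ (0, 1), δ ∈ [0, 1], G > 0, φ ∈ (0, 1), and y > 0. Suppose f is twice differentiable at y with f(y) > 0, f'(y) > 0, f''(y) < 0, ω := f(y) − y·f'(y) > 0, and f'(y) + 1 − δ = ((1 − β + φβ)/(φβ))·G. Define ε > 0 by 1/ε = −y·f(y)·f''(y)/(f'(y)·(f(y) − y·f'(y))). Then y·f''(y) > −2G·(1 − β + φβ)/(φβ) if and only if ε > (1/2)·(1 − (φβ/(1 − β + φβ))·((1 − δ)/G))·(1 + y·f'(y)/ω)^{−1}. -/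
theorem eigenvalue_elasticity_equivalence (β δ G φ y : ℝ)
    (hβ : β ∈ Set.Ioo (0 : ℝ) 1) (hδ : δ ∈ Set.Icc (0 : ℝ) 1) (hG : 0 < G)
    (hφ : φ ∈ Set.Ioo (0 : ℝ) 1) (hy : 0 < y)
    (f : ℝ → ℝ) (hf : DifferentiableAt ℝ f y) (hf' : DifferentiableAt ℝ (deriv f) y)
    (hfy : 0 < f y) (hf'y : 0 < deriv f y) (hf''y : deriv (deriv f) y < 0)
    (ω : ℝ) (hω : ω = f y - y * deriv f y) (hωpos : 0 < ω)
    (hss : deriv f y + 1 - δ = ((1 - β + φ * β) / (φ * β)) * G)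
    (ε : ℝ) (hε : 0 < ε)
    (hεdef : 1 / ε =
      -(y * f y * deriv (deriv f) y) / (deriv f y * (f y - y * deriv f y))) :
    y * deriv (deriv f) y > -(2 * G * (1 - β + φ * β) / (φ * β)) ↔
    ε > (1 / 2) * (1 - (φ * β / (1 - β + φ * β)) * ((1 - δ) / G)) *
      (1 + y * deriv f y / ω)⁻¹ := by
  obtain ⟨hβ0, hβ1⟩ := hβ
  obtain ⟨hδ0, hδ1⟩ := hδ
  obtain ⟨hφ0, hφ1⟩ := hφ
  set A := f y with hA
  set P := deriv f y with hP
  set S := deriv (deriv f) y with hS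
  have hφβ : 0 < φ * β := mul_pos hφ0 hβ0
  have h1 : 0 < 1 - β + φ * β := by nlinarith
  have hPδ : 0 < P + 1 - δ := by linarith
  have hkey : (P + 1 - δ) * (φ * β) = (1 - β + φ * β) * G := by
    rw [div_mul_eq_mul_div, eq_div_iff hφβ.ne'] at hss
    linarith
  have hωA : ω + y * P = A := by rw [hω]; ring
  have hden : 0 < -(y * A * S) := by
    have := mul_neg_of_pos_of_neg (mul_pos hy hfy) hf''y
    linarith
  have hPω : 0 < P * ω := mul_pos hf'y hωpos
  rw [← hω] at hεdef
  have hεval : ε = P * ω / (-(y * A * S)) := by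
    have h2 : 1 * (P * ω) = -(y * A * S) * ε := (div_eq_div_iff hε.ne' hPω.ne').mp hεdef
    rw [eq_div_iff hden.ne']
    linarith
  have hc : (1 / 2) * (1 - (φ * β / (1 - β + φ * β)) * ((1 - δ) / G)) *
      (1 + y * P / ω)⁻¹ = P * ω / (2 * (P + 1 - δ) * A) := by
    have h2 : 1 + y * P / ω = A / ω := by
      rw [eq_div_iff hωpos.ne']
      field_simp
      linarith
    have h3 : φ * β / (1 - β + φ * β) * ((1 - δ) / G) = (1 - δ) / (P + 1 - δ) := by
      rw [div_mul_div_comm, div_eq_div_iff (by positivity) hPδ.ne']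
      linear_combination (1 - δ) * hkey
    rw [h2, h3, inv_div, one_sub_div hPδ.ne']
    field_simp
    ring
  rw [hc, hεval, gt_iff_lt, gt_iff_lt]
  have hA2 : 0 < 2 * (P + 1 - δ) * A := by positivity
  rw [div_lt_div_iff₀ hA2 hden]
  have hGQ : 2 * G * (1 - β + φ * β) / (φ * β) = 2 * (P + 1 - δ) := by
    rw [div_eq_iff hφβ.ne']
    linear_combination (-2) * hkey
  have hPωA : 0 < P * ω * A := mul_pos hPω hfy
  constructor
  · intro h
    have h2 : -(y * S) < 2 * (P + 1 - δ) := by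
      rw [← hGQ]; linarith
    nlinarith [mul_pos hPωA (show 0 < 2 * (P + 1 - δ) + y * S by linarith)]
  · intro h
    have h2 : -(y * S) < 2 * (P + 1 - δ) := by nlinarith [hPωA, h]
    rw [hGQ]
    linarith
end

section
/- Let β ∈ (0, 1), δ ∈ [0, 1], G > 1, φ ∈ (0, 1). Let f : (0, ∞) → ℝ be twice continuously differentiable, and let y_b > 0 satisfy f'(y_b) + 1 − δ = ((1 − β + φβ)/(φβ))·G, f''(y_b) < 0, and y_b·f''(y_b) > −2G·(1 − β + φβ)/(φβ). Then there exists ε > 0 such that for all y₀ > 0 and D ≥ 0 with |y₀ − y_b| < ε and D < ε, the sequence (y_t)_{t≥0} defined by y_0 = y₀ and y_{t+1} = (1/G)·(φβ/(1 − β + φβ))·( y_t·(f'(y_t) + 1 − δ) + D·G^{−t} ) is well defined (y_t > 0 for all t) and converges to y_b as t → ∞. -/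
open Filter Set

set_option maxHeartbeats 2000000 in
theorem local_determinacy_bubbly_equilibrium (β δ G φ : ℝ)
    (hβ : β ∈ Set.Ioo (0 : ℝ) 1) (hδ : δ ∈ Set.Icc (0 : ℝ) 1) (hG : 1 < G)
    (hφ : φ ∈ Set.Ioo (0 : ℝ) 1)
    (f : ℝ → ℝ) (hf : ContDiffOn ℝ 2 f (Set.Ioi 0))
    (y_b : ℝ) (hy_b : 0 < y_b)
    (hss : deriv f y_b + 1 - δ = ((1 - β + φ * β) / (φ * β)) * G)
    (hf'' : deriv (deriv f) y_b < 0)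
    (heig : y_b * deriv (deriv f) y_b > -(2 * G * (1 - β + φ * β) / (φ * β))) :
    ∃ ε > 0, ∀ y₀ : ℝ, 0 < y₀ → |y₀ - y_b| < ε → ∀ D : ℝ, 0 ≤ D → D < ε →
      ∀ y : ℕ → ℝ, y 0 = y₀ →
        (∀ t : ℕ, y (t + 1) =
          (1 / G) * (φ * β / (1 - β + φ * β)) *
            (y t * (deriv f (y t) + 1 - δ) + D / G ^ t)) →
        (∀ t : ℕ, 0 < y t) ∧ Filter.Tendsto y Filter.atTop (nhds y_b) := by
  obtain ⟨hβ0, hβ1⟩ := hβ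
  obtain ⟨hφ0, hφ1⟩ := hφ
  have hG0 : (0:ℝ) < G := lt_trans one_pos hG
  have hden : 0 < 1 - β + φ * β := by nlinarith
  have hnum : 0 < φ * β := by positivity
  set k : ℝ := (1 / G) * (φ * β / (1 - β + φ * β)) with hk_def
  have hk : 0 < k := by positivity
  set F : ℝ → ℝ := fun z => k * (z * (deriv f z + 1 - δ)) with hF_def
  set F' : ℝ → ℝ := fun z => k * ((deriv f z + 1 - δ) + z * deriv (deriv f) z) with hF'_def
  -- regularity of deriv f on Ioi 0
  have hopen : IsOpen (Set.Ioi (0:ℝ)) := isOpen_Ioi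
  have hd1 : ContDiffOn ℝ 1 (deriv f) (Set.Ioi 0) := by
    have := hf.deriv_of_isOpen hopen (m := 1) (by norm_num)
    exact this
  have hderivf_diff : ∀ z ∈ Set.Ioi (0:ℝ), DifferentiableAt ℝ (deriv f) z := fun z hz =>
    (hd1.differentiableOn one_ne_zero).differentiableAt (hopen.mem_nhds hz)
  have hcont2 : ContinuousOn (deriv (deriv f)) (Set.Ioi 0) :=
    hd1.continuousOn_deriv_of_isOpen hopen le_rfl
  have hcont1 : ContinuousOn (deriv f) (Set.Ioi 0) := hd1.continuousOn
  -- F has derivative F'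
  have hFderiv : ∀ z ∈ Set.Ioi (0:ℝ), HasDerivAt F (F' z) z := by
    intro z hz
    have h1 : HasDerivAt (deriv f) (deriv (deriv f) z) z := (hderivf_diff z hz).hasDerivAt
    have h2 : HasDerivAt (fun w => deriv f w + 1 - δ) (deriv (deriv f) z) z := by
      simpa [add_sub_assoc] using (h1.add_const (1 - δ))
    have h3 : HasDerivAt (fun w => w * (deriv f w + 1 - δ))
        (1 * (deriv f z + 1 - δ) + z * deriv (deriv f) z) z :=
      (hasDerivAt_id z).mul h2
    have h4 := h3.const_mul k
    simpa [hF_def, hF'_def, one_mul] using h4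
  -- F' is continuous at y_b
  have hF'cont : ContinuousAt F' y_b := by
    have : ContinuousOn F' (Set.Ioi 0) := by
      apply ContinuousOn.mul continuousOn_const
      exact ((hcont1.add continuousOn_const).sub continuousOn_const).add
        (continuousOn_id.mul hcont2)
    exact this.continuousAt (hopen.mem_nhds hy_b)
  -- value of F' at y_b
  have hkss : k * (deriv f y_b + 1 - δ) = 1 := by
    rw [hss, hk_def]; field_simp
  have hFb : F y_b = y_b := by
    have : F y_b = y_b * (k * (deriv f y_b + 1 - δ)) := by ring
    rw [this, hkss, mul_one]
  have hF'b : F' y_b = 1 + k * (y_b * deriv (deriv f) y_b) := by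
    simp only [hF'_def, mul_add]
    rw [hkss]
  have hF'b_lt : |F' y_b| < 1 := by
    rw [abs_lt, hF'b]
    constructor
    · have h2k : 2 * G * (1 - β + φ * β) / (φ * β) = 2 / k := by
        rw [hk_def]; field_simp
      rw [h2k] at heig
      have h5 : k * (-(2 / k)) < k * (y_b * deriv (deriv f) y_b) :=
        mul_lt_mul_of_pos_left heig hk
      have h6 : k * (-(2 / k)) = -2 := by field_simp
      nlinarith
    · nlinarith [mul_pos hy_b (neg_pos.mpr hf''), hk]
  set lam : ℝ := (1 + |F' y_b|) / 2 with hlam_def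
  have hlam0 : 0 < lam := by positivity
  have hlam1 : lam < 1 := by rw [hlam_def]; linarith
  have hFblam : |F' y_b| < lam := by rw [hlam_def]; linarith [abs_nonneg (F' y_b)]
  -- find radius r
  obtain ⟨d, hd0, hd⟩ := Metric.continuousAt_iff.mp hF'cont (lam - |F' y_b|) (by linarith)
  set r : ℝ := min (d / 2) (y_b / 2) with hr_def
  have hr0 : 0 < r := by positivity
  have hr_yb : r ≤ y_b / 2 := min_le_right _ _
  have hF'bound : ∀ z : ℝ, |z - y_b| ≤ r → |F' z| ≤ lam := by
    intro z hz
    have hdist : dist z y_b < d := by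
      rw [Real.dist_eq]
      calc |z - y_b| ≤ r := hz
        _ ≤ d / 2 := min_le_left _ _
        _ < d := by linarith
    have := hd hdist
    rw [Real.dist_eq] at this
    calc |F' z| ≤ |F' z - F' y_b| + |F' y_b| := by
          have := abs_sub_abs_le_abs_sub (F' z) (F' y_b); linarith [abs_abs (F' z)]
      _ ≤ lam := by linarith
  -- points in the ball are positive
  have hball_pos : ∀ z : ℝ, |z - y_b| ≤ r → 0 < z := by
    intro z hz
    have := abs_le.mp hz
    have : y_b - r ≤ z := by linarith [this.1]
    linarith [hr_yb]
  have hball_sub : Set.Icc (y_b - r) (y_b + r) ⊆ Set.Ioi (0:ℝ) := by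
    intro z hz
    exact hball_pos z (abs_le.mpr ⟨by linarith [hz.1], by linarith [hz.2]⟩)
  -- contraction estimate
  have hcontr : ∀ z : ℝ, |z - y_b| ≤ r → |F z - y_b| ≤ lam * |z - y_b| := by
    intro z hz
    have hzmem : z ∈ Set.Icc (y_b - r) (y_b + r) := by
      have := abs_le.mp hz; exact ⟨by linarith [this.1], by linarith [this.2]⟩
    have hbmem : y_b ∈ Set.Icc (y_b - r) (y_b + r) := by
      constructor <;> linarith
    have := (convex_Icc (y_b - r) (y_b + r)).norm_image_sub_le_of_norm_hasDerivWithin_le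
      (f := F) (f' := F')
      (fun x hx => (hFderiv x (hball_sub hx)).hasDerivWithinAt)
      (fun x hx => by
        rw [Real.norm_eq_abs]
        apply hF'bound
        exact abs_le.mpr ⟨by linarith [hx.1], by linarith [hx.2]⟩)
      hbmem hzmem
    rw [Real.norm_eq_abs, Real.norm_eq_abs, hFb] at this
    exact this
  -- choose ε
  set ε : ℝ := r * (1 - lam) / (1 + k) with hε_def
  have h1lam : (0:ℝ) < 1 - lam := by linarith
  have hε0 : 0 < ε := div_pos (mul_pos hr0 h1lam) (by linarith)
  set M : ℝ := ε + k * ε / (1 - lam) with hM_def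
  have hεk : ε * (1 + k) = r * (1 - lam) := by
    rw [hε_def]; field_simp
  have hM_eq : M * (1 - lam) = ε * (1 - lam) + k * ε := by
    rw [hM_def]; field_simp
  have hM_r : M ≤ r := by
    have h7 : M * (1 - lam) ≤ r * (1 - lam) := by
      rw [hM_eq, ← hεk]
      nlinarith [mul_nonneg hlam0.le hε0.le]
    exact le_of_mul_le_mul_right h7 h1lam
  have hε_M : ε ≤ M := by
    rw [hM_def]
    have : 0 ≤ k * ε / (1 - lam) := by positivity
    linarith
  have hM0 : 0 < M := lt_of_lt_of_le hε0 hε_M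
  clear_value k F F' lam r ε M
  clear hf hd1 hcont1 hcont2 hderivf_diff hF'cont hd hss heig hf'' hFb hF'b hF'b_lt hd0 hFblam hkss
  refine ⟨ε, hε0, ?_⟩
  intro y₀ hy₀ hy₀ε D hD0 hDε y h0 hrec
  -- recursion in terms of F
  have hrec' : ∀ t, y (t + 1) = F (y t) + k * (D / G ^ t) := by
    intro t
    rw [hrec t, hF_def, hk_def]; ring
  -- invariant: |y t - y_b| ≤ M
  have hinv : ∀ t, |y t - y_b| ≤ M := by
    intro t
    induction t with
    | zero => rw [h0]; linarith
    | succ t ih =>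
      have hyt_r : |y t - y_b| ≤ r := le_trans ih hM_r
      have hcon := hcontr (y t) hyt_r
      have hpow : (1:ℝ) ≤ G ^ t := one_le_pow₀ (le_of_lt hG)
      have hDpow : D / G ^ t ≤ ε := by
        calc D / G ^ t ≤ D / 1 := by
              apply div_le_div_of_nonneg_left hD0 one_pos hpow
          _ = D := div_one D
          _ ≤ ε := le_of_lt hDε
      have hDpow0 : 0 ≤ D / G ^ t := div_nonneg hD0 (by positivity)
      calc |y (t + 1) - y_b| = |(F (y t) - y_b) + k * (D / G ^ t)| := by
            rw [hrec' t, add_sub_right_comm]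
        _ ≤ |F (y t) - y_b| + |k * (D / G ^ t)| := abs_add_le _ _
        _ ≤ lam * |y t - y_b| + k * ε := by
            have : |k * (D / G ^ t)| = k * (D / G ^ t) := abs_of_nonneg (by positivity)
            rw [this]
            have := mul_le_mul_of_nonneg_left hDpow (le_of_lt hk)
            linarith
        _ ≤ lam * M + k * ε := by nlinarith [abs_nonneg (y t - y_b)]
        _ ≤ M := by nlinarith
  have hpos : ∀ t, 0 < y t := fun t => hball_pos (y t) (le_trans (hinv t) hM_r)
  refine ⟨hpos, ?_⟩
  -- decay estimate
  set ρ : ℝ := max lam (1 / G) with hρ_def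
  have hρ0 : 0 < ρ := lt_of_lt_of_le hlam0 (le_max_left _ _)
  have hρ1 : ρ < 1 := by
    apply max_lt hlam1
    rw [div_lt_one hG0]; exact hG
  have hlamρ : lam ≤ ρ := le_max_left _ _
  have hGρ : 1 / G ≤ ρ := le_max_right _ _
  set C : ℝ := k * ε / ρ with hC_def
  have hC0 : 0 < C := by positivity
  have hdecay : ∀ t, |y t - y_b| ≤ (M + t * C) * ρ ^ t := by
    intro t
    induction t with
    | zero => simpa using hinv 0
    | succ t ih =>
      have hyt_r : |y t - y_b| ≤ r := le_trans (hinv t) hM_r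
      have hcon := hcontr (y t) hyt_r
      have hDG : D / G ^ t ≤ ε * ρ ^ t := by
        have h1 : D / G ^ t = D * (1 / G) ^ t := by
          rw [div_pow, one_pow]; ring
        rw [h1]
        have h2 : (1 / G) ^ t ≤ ρ ^ t :=
          pow_le_pow_left₀ (by positivity) hGρ t
        have h3 : D * (1/G) ^ t ≤ ε * (1/G) ^ t := by
          apply mul_le_mul_of_nonneg_right (le_of_lt hDε) (by positivity)
        have h4 : ε * (1/G)^t ≤ ε * ρ ^ t :=
          mul_le_mul_of_nonneg_left h2 (le_of_lt hε0)
        linarith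
      have hρt : (0:ℝ) < ρ ^ t := by positivity
      have hCρ : C * ρ = k * ε := by
        rw [hC_def]; field_simp
      calc |y (t + 1) - y_b| = |(F (y t) - y_b) + k * (D / G ^ t)| := by
            rw [hrec' t, add_sub_right_comm]
        _ ≤ |F (y t) - y_b| + |k * (D / G ^ t)| := abs_add_le _ _
        _ ≤ lam * |y t - y_b| + k * (ε * ρ ^ t) := by
            have h5 : |k * (D / G ^ t)| = k * (D / G ^ t) :=
              abs_of_nonneg (by positivity)
            rw [h5]
            have := mul_le_mul_of_nonneg_left hDG (le_of_lt hk)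
            linarith
        _ ≤ ρ * ((M + t * C) * ρ ^ t) + k * (ε * ρ ^ t) := by
            have ha : lam * |y t - y_b| ≤ ρ * ((M + t * C) * ρ ^ t) := by
              have h6 : lam * |y t - y_b| ≤ ρ * |y t - y_b| :=
                mul_le_mul_of_nonneg_right hlamρ (abs_nonneg _)
              have h7 : ρ * |y t - y_b| ≤ ρ * ((M + t * C) * ρ ^ t) :=
                mul_le_mul_of_nonneg_left ih (le_of_lt hρ0)
              linarith
            linarith
        _ = (M + (t + 1 : ℕ) * C) * ρ ^ (t + 1) := by
            push_cast
            rw [pow_succ]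
            nlinarith [hCρ, hρt]
  -- conclude convergence
  have hbound : Tendsto (fun t : ℕ => (M + t * C) * ρ ^ t) atTop (nhds 0) := by
    have h1 : Tendsto (fun t : ℕ => M * ρ ^ t) atTop (nhds 0) := by
      simpa using (tendsto_pow_atTop_nhds_zero_of_lt_one (le_of_lt hρ0) hρ1).const_mul M
    have h2 : Tendsto (fun t : ℕ => C * (t * ρ ^ t)) atTop (nhds 0) := by
      simpa using (tendsto_self_mul_const_pow_of_lt_one (le_of_lt hρ0) hρ1).const_mul C
    have h3 := h1.add h2
    simp only [add_zero] at h3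
    convert h3 using 2 with t
    ring
  have hzero : Tendsto (fun t => y t - y_b) atTop (nhds 0) :=
    squeeze_zero_norm (fun t => by rw [Real.norm_eq_abs]; exact hdecay t) hbound
  have := hzero.add_const y_b
  simpa using this
end
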